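/- If P_{ij} solve the Kolmogorov forward equations with nonnegative transition rates τ_{kj} bounded by τ*, and P_{ij}(0) ∈ [0,1] with Σ_j P_{ij}(0)=1, then P_{ij}(t) ∈ [0,1] for all t ≥ 0. -/

import Mathlib

open scoped BigOperators

/-- Solutions of the Kolmogorov forward equations with nonnegative bounded transition
rates and probabilistic initial data stay in `[0,1]`. -/
theorem kolmogorov_probabilities_mem_unit_interval
    (r : ℕ) (hr : 1 ≤ r)
    (τ : Fin r → Fin r → ℝ → ℝ) (c : Fin r → ℝ → ℝ) (τstar : ℝ)
    (hτcont : ∀ j k, Continuous (τ j k))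
    (hτnonneg : ∀ j k t, 0 ≤ t → 0 ≤ τ j k t)
    (hτbound : ∀ j k t, 0 ≤ t → τ j k t ≤ τstar)
    (hτdiag : ∀ j t, τ j j t = 0)
    (hc : ∀ j t, c j t = ∑ k ∈ Finset.univ.erase j, τ j k t)
    (P : Fin r → ℝ → ℝ)
    (hode : ∀ j t, 0 ≤ t →
      HasDerivAt (P j) (- c j t * P j t + ∑ k, P k t * τ k j t) t)
    (hinit01 : ∀ j, P j 0 ∈ Set.Icc (0 : ℝ) 1)
    (hinitsum : ∑ j, P j 0 = 1) :
    ∀ j t, 0 ≤ t → P j t ∈ Set.Icc (0 : ℝ) 1 := by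
  have i0 : Fin r := ⟨0, hr⟩
  have hτstar0 : 0 ≤ τstar := (hτdiag i0 0) ▸ hτbound i0 i0 0 le_rfl
  have hcnonneg : ∀ j t, 0 ≤ t → 0 ≤ c j t := by
    intro j t ht
    rw [hc]
    exact Finset.sum_nonneg fun k _ => hτnonneg j k t ht
  set K : ℝ := r * τstar + 1 with hK
  have hKbig : ∀ j t, 0 ≤ t → ∑ k, τ k j t + 1 ≤ K := by
    intro j t ht
    have : ∑ k, τ k j t ≤ (Finset.univ : Finset (Fin r)).card • τstar :=
      Finset.sum_le_card_nsmul _ _ _ fun k _ => hτbound k j t ht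
    simp only [Finset.card_univ, Fintype.card_fin, nsmul_eq_mul] at this
    linarith
  -- key positivity estimate
  have key : ∀ ε : ℝ, 0 < ε → ∀ T : ℝ, 0 ≤ T → ∀ t ∈ Set.Icc (0:ℝ) T, ∀ j,
      0 < P j t + ε * Real.exp (K * t) := by
    intro ε hε T hT
    by_contra hcon
    push_neg at hcon
    obtain ⟨t₁, ht₁, j₁, hj₁⟩ := hcon
    set h : Fin r → ℝ → ℝ := fun j t => P j t + ε * Real.exp (K * t) with hdefh
    set S : Set ℝ := {t | t ∈ Set.Icc (0:ℝ) T ∧ ∃ j, h j t ≤ 0} with hdefS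
    have hScl : IsClosed S := by
      have hrw : S = ⋃ j : Fin r, (Set.Icc (0:ℝ) T ∩ (h j) ⁻¹' Set.Iic 0) := by
        ext t
        simp only [hdefS, Set.mem_setOf_eq, Set.mem_iUnion, Set.mem_inter_iff,
          Set.mem_preimage, Set.mem_Iic]
        tauto
      rw [hrw]
      refine isClosed_iUnion_of_finite fun j => ?_
      refine ContinuousOn.preimage_isClosed_of_isClosed ?_ isClosed_Icc isClosed_Iic
      intro t ht
      exact (((hode j t ht.1).continuousAt.add (by fun_prop))).continuousWithinAt
    have hSne : S.Nonempty := ⟨t₁, ht₁, j₁, hj₁⟩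
    have hSbdd : BddBelow S := ⟨0, fun t ht => ht.1.1⟩
    set t₀ : ℝ := sInf S with hdeft₀
    have ht₀S : t₀ ∈ S := hScl.csInf_mem hSne hSbdd
    obtain ⟨ht₀Icc, j₀, hj₀⟩ := ht₀S
    have ht₀nonneg : (0:ℝ) ≤ t₀ := ht₀Icc.1
    have hpos0 : ∀ k, 0 < h k 0 := by
      intro k
      have h1 := (hinit01 k).1
      have h2 : (0:ℝ) < ε * Real.exp (K * 0) := by positivity
      simp only [hdefh]
      nlinarith
    have ht₀pos : 0 < t₀ := by
      rcases ht₀nonneg.lt_or_eq with h' | h'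
      · exact h'
      · exact absurd hj₀ (by rw [← h']; exact not_le.2 (hpos0 j₀))
    -- before t₀ everything is positive
    have hbefore : ∀ t, 0 ≤ t → t < t₀ → ∀ k, 0 < h k t := by
      intro t ht htlt k
      by_contra hk
      push_neg at hk
      have : t ∈ S := ⟨⟨ht, htlt.le.trans ht₀Icc.2⟩, k, hk⟩
      exact absurd (csInf_le hSbdd this) (not_le.2 htlt)
    -- at t₀ everything is nonnegative (left limit)
    have hat : ∀ k, 0 ≤ h k t₀ := by
      intro k
      have hcontk : ContinuousAt (h k) t₀ :=
        (hode k t₀ ht₀nonneg).continuousAt.add (by fun_prop)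
      have htend : Filter.Tendsto (h k) (nhdsWithin t₀ (Set.Iio t₀)) (nhds (h k t₀)) :=
        hcontk.continuousWithinAt.tendsto
      refine ge_of_tendsto htend ?_
      filter_upwards [Ioo_mem_nhdsLT_of_mem (Set.mem_Ioc.2 ⟨ht₀pos, le_rfl⟩)] with t ht
      exact (hbefore t ht.1.le ht.2 k).le
    have hj₀eq : h j₀ t₀ = 0 := le_antisymm hj₀ (hat j₀)
    have hPj₀ : P j₀ t₀ = -(ε * Real.exp (K * t₀)) := by
      have := hj₀eq
      simp only [hdefh] at this
      linarith
    -- derivative of h j₀ at t₀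
    set e : ℝ := ε * Real.exp (K * t₀) with hdefe
    have hepos : 0 < e := by positivity
    have hexpderiv : HasDerivAt (fun t => ε * Real.exp (K * t)) (ε * (Real.exp (K * t₀) * K)) t₀ := by
      simpa using (((hasDerivAt_id t₀).const_mul K).exp.const_mul ε)
    set d : ℝ := (- c j₀ t₀ * P j₀ t₀ + ∑ k, P k t₀ * τ k j₀ t₀) + ε * (Real.exp (K * t₀) * K)
      with hdefd
    have hd : HasDerivAt (h j₀) d t₀ := (hode j₀ t₀ ht₀nonneg).add hexpderiv
    have hdpos : 0 < d := by
      have h1 : 0 ≤ c j₀ t₀ * e := mul_nonneg (hcnonneg j₀ t₀ ht₀nonneg) hepos.le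
      have h2 : ∑ k, P k t₀ * τ k j₀ t₀ ≥ -e * ∑ k, τ k j₀ t₀ := by
        rw [Finset.mul_sum]
        refine Finset.sum_le_sum fun k _ => ?_
        have hPk : -e ≤ P k t₀ := by
          have := hat k
          simp only [hdefh] at this
          linarith
        exact mul_le_mul_of_nonneg_right hPk (hτnonneg k j₀ t₀ ht₀nonneg)
      have h3 : ∑ k, τ k j₀ t₀ + 1 ≤ K := hKbig j₀ t₀ ht₀nonneg
      have h4 : -e * ∑ k, τ k j₀ t₀ ≥ -e * (K - 1) := by
        have : ∑ k, τ k j₀ t₀ ≤ K - 1 := by linarith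
        nlinarith
      have h5 : - c j₀ t₀ * P j₀ t₀ = c j₀ t₀ * e := by rw [hPj₀]; ring
      have h6 : ε * (Real.exp (K * t₀) * K) = e * K := by rw [hdefe]; ring
      rw [hdefd, h5, h6]
      nlinarith
    -- contradiction: h j₀ positive just before t₀, zero at t₀, increasing at t₀
    have hslope : Filter.Tendsto (slope (h j₀) t₀) (nhdsWithin t₀ {t₀}ᶜ) (nhds d) :=
      hasDerivAt_iff_tendsto_slope.1 hd
    have hslope' : Filter.Tendsto (slope (h j₀) t₀) (nhdsWithin t₀ (Set.Iio t₀)) (nhds d) :=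
      hslope.mono_left (nhdsWithin_mono _ fun t ht => ne_of_lt ht)
    have hev : ∀ᶠ t in nhdsWithin t₀ (Set.Iio t₀), False := by
      filter_upwards [hslope'.eventually (eventually_gt_nhds (half_lt_self hdpos)),
        Ioo_mem_nhdsLT_of_mem (Set.mem_Ioc.2 ⟨ht₀pos, le_rfl⟩)] with t hts htI
      have hpos : 0 < h j₀ t := hbefore t htI.1.le htI.2 j₀
      have hslopeval : slope (h j₀) t₀ t = (h j₀ t - h j₀ t₀) / (t - t₀) :=
        slope_def_field _ _ _
      rw [hslopeval, hj₀eq, sub_zero] at hts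
      have hneg : (h j₀ t) / (t - t₀) < 0 := div_neg_of_pos_of_neg hpos (by linarith [htI.2])
      linarith [half_pos hdpos]
    obtain ⟨t, ht⟩ := hev.exists
    exact ht
  -- nonnegativity
  have hnonneg : ∀ j t, 0 ≤ t → 0 ≤ P j t := by
    intro j t ht
    by_contra hneg
    push_neg at hneg
    set E : ℝ := Real.exp (K * t) with hdefE
    have hEpos : 0 < E := Real.exp_pos _
    set ε : ℝ := -P j t / (2 * E) with hdefε
    have hεpos : 0 < ε := div_pos (by linarith) (by linarith)
    have hkey := key ε hεpos t ht t ⟨ht, le_rfl⟩ j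
    have hmul : ε * E = -P j t / 2 := by
      rw [hdefε]
      field_simp
    rw [hmul] at hkey
    linarith
  -- sum is constant equal to 1
  have hsum : ∀ t, 0 ≤ t → ∑ k, P k t = 1 := by
    intro t ht
    have hderiv : ∀ s, 0 ≤ s → HasDerivAt (fun u => ∑ k, P k u) 0 s := by
      intro s hs
      have h0 : HasDerivAt (fun u => ∑ k, P k u)
          (∑ k, (- c k s * P k s + ∑ l, P l s * τ l k s)) s :=
        HasDerivAt.fun_sum fun k _ => hode k s hs
      have hc' : ∀ l, c l s = ∑ k, τ l k s := by
        intro l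
        rw [hc]
        exact Finset.sum_erase (f := fun k => τ l k s) _ (hτdiag l s)
      have hzero : (∑ k, (- c k s * P k s + ∑ l, P l s * τ l k s)) = 0 := by
        rw [Finset.sum_add_distrib, Finset.sum_comm]
        have h1 : ∀ l : Fin r, ∑ k : Fin r, P l s * τ l k s = c l s * P l s := by
          intro l
          rw [← Finset.mul_sum, hc' l, mul_comm]
        rw [Finset.sum_congr rfl fun l _ => h1 l, ← Finset.sum_add_distrib]
        exact Finset.sum_eq_zero fun l _ => by ring
      rwa [hzero] at h0
    have hcont : ContinuousOn (fun u => ∑ k, P k u) (Set.Icc 0 t) := by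
      intro s hs
      exact (hderiv s hs.1).continuousAt.continuousWithinAt
    have := constant_of_has_deriv_right_zero hcont
      (fun s hs => (hderiv s hs.1).hasDerivWithinAt) t ⟨ht, le_rfl⟩
    rw [this, hinitsum]
  -- conclusion
  intro j t ht
  refine ⟨hnonneg j t ht, ?_⟩
  have h1 : ∑ k, P k t = 1 := hsum t ht
  have h2 : ∑ k ∈ Finset.univ.erase j, P k t ≥ 0 :=
    Finset.sum_nonneg fun k _ => hnonneg k t ht
  have h3 : P j t + ∑ k ∈ Finset.univ.erase j, P k t = 1 := by
    rw [← h1]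
    exact Finset.add_sum_erase _ (fun k => P k t) (Finset.mem_univ j)
  linarith
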